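/- arXiv:2006.05630 — 3 statements merged into one kernel-verified Lean document; each statement's English description precedes it below -/
import Mathlib

section
/- Let Y be a random variable with 0 ≤ Y ≤ M almost surely and Var(Y) > 0. Then the function α ↦ α log E[exp(−Y/α)] is strictly convex on (0, ∞); consequently, for any δ ≥ 0, α ↦ α log E[exp(−Y/α)] + αδ is strictly convex on (0, ∞). -/
open MeasureTheory Real Set

/-- A convex function that is strictly convex at midpoints is strictly convex. -/
private lemma strictConvexOn_of_convexOn_midpoint {s : Set ℝ} {f : ℝ → ℝ}
    (hc : ConvexOn ℝ s f)
    (hm : ∀ x ∈ s, ∀ y ∈ s, x ≠ y → f ((x + y) / 2) < (f x + f y) / 2) :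
    StrictConvexOn ℝ s f := by
  refine ⟨hc.1, fun x hx y hy hxy a b ha hb hab => ?_⟩
  have hmemm : (x + y) / 2 ∈ s := by
    have h0 := hc.1 hx hy (by norm_num : (0:ℝ) ≤ 1/2) (by norm_num : (0:ℝ) ≤ 1/2) (by norm_num)
    simp only [smul_eq_mul] at h0
    rwa [show (1/2:ℝ) * x + 1/2 * y = (x + y) / 2 from by ring] at h0
  have hmid := hm x hx y hy hxy
  simp only [smul_eq_mul]
  have ha1 : a < 1 := by linarith
  have hb1 : b < 1 := by linarith
  rcases lt_trichotomy a (1/2) with h | h | h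
  · -- a < 1/2 : a•x + b•y is between the midpoint and y
    have hcc := hc.2 hmemm hy (by linarith : (0:ℝ) ≤ 2*a) (by linarith : (0:ℝ) ≤ 1 - 2*a)
      (by ring)
    simp only [smul_eq_mul] at hcc
    have harg : 2*a * ((x+y)/2) + (1-2*a) * y = a * x + b * y := by
      have : b = 1 - a := by linarith
      rw [this]; ring
    rw [harg] at hcc
    have h2a : (0:ℝ) < 2*a := by linarith
    have := mul_lt_mul_of_pos_left hmid h2a
    have hb' : b = 1 - a := by linarith
    subst hb'; linarith
  · have hb' : b = 1/2 := by linarith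
    subst h; rw [hb']
    have harg : (1/2 : ℝ) * x + 1/2 * y = (x + y)/2 := by ring
    rw [harg]; linarith
  · -- a > 1/2 : a•x + b•y is between x and the midpoint
    have hcc := hc.2 hx hmemm (by linarith : (0:ℝ) ≤ 1 - 2*b) (by linarith : (0:ℝ) ≤ 2*b)
      (by ring)
    simp only [smul_eq_mul] at hcc
    have harg : (1-2*b) * x + 2*b * ((x+y)/2) = a * x + b * y := by
      have : a = 1 - b := by linarith
      rw [this]; ring
    rw [harg] at hcc
    have h2b : (0:ℝ) < 2*b := by linarith
    have := mul_lt_mul_of_pos_left hmid h2b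
    have ha' : a = 1 - b := by linarith
    subst ha'; linarith

/-- **Strict convexity of the (negated) KL dual objective.** If `0 ≤ Y ≤ M` a.s. and
`Var(Y) > 0`, then `α ↦ α log E[exp(−Y/α)]` is strictly convex on `(0, ∞)`, and hence so is
`α ↦ α log E[exp(−Y/α)] + αδ` for every `δ ≥ 0`. -/
theorem stmt16 {Ω : Type*} [MeasurableSpace Ω] (μ : Measure Ω) [IsProbabilityMeasure μ]
    (Y : Ω → ℝ) (hY : Measurable Y) (M : ℝ) (hbd : ∀ᵐ ω ∂μ, Y ω ∈ Set.Icc 0 M)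
    (hvar : 0 < ProbabilityTheory.variance Y μ) :
    StrictConvexOn ℝ (Set.Ioi (0 : ℝ))
      (fun α : ℝ => α * Real.log (∫ ω, Real.exp (-Y ω / α) ∂μ)) ∧
    ∀ δ : ℝ, 0 ≤ δ → StrictConvexOn ℝ (Set.Ioi (0 : ℝ))
      (fun α : ℝ => α * Real.log (∫ ω, Real.exp (-Y ω / α) ∂μ) + α * δ) := by
  haveI : (ae μ).NeBot := ae_neBot.mpr (IsProbabilityMeasure.ne_zero μ)
  set J : ℝ → ℝ := fun c => ∫ ω, Real.exp (c * Y ω) ∂μ with hJdef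
  -- measurability and boundedness
  have hmeas : ∀ c : ℝ, AEStronglyMeasurable (fun ω => Real.exp (c * Y ω)) μ :=
    fun c => ((hY.const_mul c).exp).aestronglyMeasurable
  have habs : ∀ c : ℝ, ∀ᵐ ω ∂μ, |c * Y ω| ≤ |c| * M := by
    intro c
    filter_upwards [hbd] with ω hω
    rw [abs_mul]
    calc |c| * |Y ω| = |c| * Y ω := by rw [abs_of_nonneg hω.1]
    _ ≤ |c| * M := mul_le_mul_of_nonneg_left hω.2 (abs_nonneg c)
  have hmem : ∀ (c : ℝ) (p : ENNReal), MemLp (fun ω => Real.exp (c * Y ω)) p μ := by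
    intro c p
    refine MemLp.of_bound (hmeas c) (Real.exp (|c| * M)) ?_
    filter_upwards [habs c] with ω hω
    rw [Real.norm_eq_abs, Real.abs_exp]
    exact Real.exp_le_exp.mpr (le_trans (le_abs_self _) hω)
  have hint : ∀ c : ℝ, Integrable (fun ω => Real.exp (c * Y ω)) μ :=
    fun c => memLp_one_iff_integrable.mp (hmem c 1)
  have hJpos : ∀ c : ℝ, 0 < J c := by
    intro c
    have hlb : ∀ᵐ ω ∂μ, Real.exp (-(|c| * M)) ≤ Real.exp (c * Y ω) := by
      filter_upwards [habs c] with ω hω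
      exact Real.exp_le_exp.mpr (neg_le_of_abs_le hω)
    calc (0:ℝ) < Real.exp (-(|c| * M)) := Real.exp_pos _
    _ = ∫ _ω, Real.exp (-(|c| * M)) ∂μ := by simp
    _ ≤ J c := integral_mono_ae (integrable_const _) (hint c) hlb
  -- Hölder's inequality
  have hJle : ∀ c d a b : ℝ, 0 < a → 0 < b → a + b = 1 →
      J (a*c + b*d) ≤ J c ^ a * J d ^ b := by
    intro c d a b ha hb hab
    have ha1 : a < 1 := by linarith
    have hpq : Real.HolderConjugate (1/a) (1/b) := Real.holderConjugate_one_div ha hb hab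
    have h := integral_mul_le_Lp_mul_Lq_of_nonneg (μ := μ) hpq
      (f := fun ω => Real.exp (a*c * Y ω)) (g := fun ω => Real.exp (b*d * Y ω))
      (Filter.Eventually.of_forall fun ω => (Real.exp_pos _).le)
      (Filter.Eventually.of_forall fun ω => (Real.exp_pos _).le)
      (hmem _ _) (hmem _ _)
    have e1 : ∀ ω, Real.exp (a*c * Y ω) * Real.exp (b*d * Y ω)
        = Real.exp ((a*c + b*d) * Y ω) := by
      intro ω; rw [← Real.exp_add]; ring_nf
    have e2 : ∀ ω, Real.exp (a*c * Y ω) ^ (1/a : ℝ) = Real.exp (c * Y ω) := by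
      intro ω; rw [← Real.exp_mul]; congr 1; field_simp
    have e3 : ∀ ω, Real.exp (b*d * Y ω) ^ (1/b : ℝ) = Real.exp (d * Y ω) := by
      intro ω; rw [← Real.exp_mul]; congr 1; field_simp
    simp only [e1, e2, e3, one_div_one_div] at h
    exact h
  -- convexity of `log ∘ J`
  have hKconv : ConvexOn ℝ univ (fun c => Real.log (J c)) := by
    refine ⟨convex_univ, fun c _ d _ a b ha hb hab => ?_⟩
    simp only [smul_eq_mul]
    rcases ha.eq_or_lt with rfl | ha'
    · simp only [zero_mul, zero_add] at hab ⊢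
      rw [hab, one_mul, one_mul]
    rcases hb.eq_or_lt with rfl | hb'
    · simp only [zero_mul, add_zero] at hab ⊢
      rw [hab, one_mul, one_mul]
    calc Real.log (J (a*c + b*d)) ≤ Real.log (J c ^ a * J d ^ b) :=
          Real.log_le_log (hJpos _) (hJle c d a b ha' hb' hab)
    _ = a * Real.log (J c) + b * Real.log (J d) := by
        rw [Real.log_mul (Real.rpow_pos_of_pos (hJpos c) a).ne'
          (Real.rpow_pos_of_pos (hJpos d) b).ne', Real.log_rpow (hJpos c),
          Real.log_rpow (hJpos d)]
  -- strict inequality at midpoints (Cauchy–Schwarz with equality analysis)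
  have hmid : ∀ c d : ℝ, c ≠ d →
      Real.log (J ((c + d) / 2)) < (Real.log (J c) + Real.log (J d)) / 2 := by
    intro c d hcd
    set A := J c with hA
    set B := J d with hB
    set C := J ((c + d)/2) with hC
    -- the expanded square
    have hApos : 0 < A := hJpos c
    have hBpos : 0 < B := hJpos d
    have hCpos : 0 < C := hJpos _
    set q : Ω → ℝ := fun ω => B^2 * Real.exp (c * Y ω) - 2*B*C * Real.exp ((c+d)/2 * Y ω)
      + C^2 * Real.exp (d * Y ω) with hq
    have hq_eq : ∀ ω, q ω = (B * Real.exp (c/2 * Y ω) - C * Real.exp (d/2 * Y ω))^2 := by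
      intro ω
      have h1 : Real.exp (c/2 * Y ω) * Real.exp (c/2 * Y ω) = Real.exp (c * Y ω) := by
        rw [← Real.exp_add]; ring_nf
      have h2 : Real.exp (d/2 * Y ω) * Real.exp (d/2 * Y ω) = Real.exp (d * Y ω) := by
        rw [← Real.exp_add]; ring_nf
      have h3 : Real.exp (c/2 * Y ω) * Real.exp (d/2 * Y ω) = Real.exp ((c+d)/2 * Y ω) := by
        rw [← Real.exp_add]; ring_nf
      simp only [hq]; rw [← h1, ← h2, ← h3]; ring
    have hqint : Integrable q μ :=
      (((hint c).const_mul _).sub ((hint _).const_mul _)).add ((hint d).const_mul _)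
    have hqval : ∫ ω, q ω ∂μ = B^2 * A - 2*B*C*C + C^2 * B := by
      have i1 : Integrable (fun ω => B^2 * Real.exp (c * Y ω)) μ := (hint c).const_mul _
      have i2 : Integrable (fun ω => 2*B*C * Real.exp ((c+d)/2 * Y ω)) μ :=
        (hint ((c+d)/2)).const_mul _
      have i3 : Integrable (fun ω => C^2 * Real.exp (d * Y ω)) μ := (hint d).const_mul _
      have i12 : Integrable (fun ω => B^2 * Real.exp (c * Y ω)
          - 2*B*C * Real.exp ((c+d)/2 * Y ω)) μ := i1.sub i2
      rw [hq]
      rw [integral_add i12 i3, integral_sub i1 i2,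
        integral_const_mul, integral_const_mul, integral_const_mul]
    have hqnonneg : 0 ≤ᵐ[μ] q := Filter.Eventually.of_forall fun ω => by
      rw [hq_eq ω]; positivity
    have hqpos : 0 < ∫ ω, q ω ∂μ := by
      rcases (integral_nonneg_of_ae hqnonneg).lt_or_eq with h | h
      · exact h
      exfalso
      have hq0 : q =ᵐ[μ] 0 :=
        (integral_eq_zero_iff_of_nonneg_ae hqnonneg hqint).mp h.symm
      -- then Y is a.e. constant
      have hYconst : ∀ᵐ ω ∂μ, Y ω = 2 * (Real.log C - Real.log B) / (c - d) := by
        filter_upwards [hq0] with ω hω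
        have h0 : (B * Real.exp (c/2 * Y ω) - C * Real.exp (d/2 * Y ω))^2 = 0 := by
          rw [← hq_eq ω]; exact hω
        have h1 : B * Real.exp (c/2 * Y ω) = C * Real.exp (d/2 * Y ω) := by
          have := pow_eq_zero_iff (n := 2) (by norm_num) |>.mp h0
          linarith
        have h2 : Real.log B + c/2 * Y ω = Real.log C + d/2 * Y ω := by
          have hl := congrArg Real.log h1
          rwa [Real.log_mul hBpos.ne' (Real.exp_pos _).ne',
            Real.log_mul hCpos.ne' (Real.exp_pos _).ne', Real.log_exp, Real.log_exp] at hl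
        have hcd' : c - d ≠ 0 := sub_ne_zero.mpr hcd
        field_simp
        linarith [h2]
      set r : ℝ := 2 * (Real.log C - Real.log B) / (c - d) with hr
      have hYr : Y =ᵐ[μ] fun _ => r := hYconst
      have hEY : ∫ ω, Y ω ∂μ = r := by
        rw [integral_congr_ae hYr]; simp
      have hev : ProbabilityTheory.evariance Y μ = 0 := by
        rw [ProbabilityTheory.evariance_eq_zero_iff hY.aemeasurable]
        rw [hEY]; exact hYr
      rw [ProbabilityTheory.variance, hev] at hvar
      simp at hvar
    -- conclude C^2 < A * B
    have hABC : C^2 < A * B := by nlinarith [hqval, hqpos, hJpos d]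
    have hClog : 2 * Real.log C < Real.log A + Real.log B := by
      have := Real.log_lt_log (pow_pos hCpos 2) hABC
      rwa [Real.log_pow, Real.log_mul (hJpos c).ne' (hJpos d).ne', Nat.cast_ofNat] at this
    linarith
  have Kstrict : StrictConvexOn ℝ univ (fun c => Real.log (J c)) :=
    strictConvexOn_of_convexOn_midpoint hKconv (fun x _ y _ hxy => hmid x y hxy)
  -- the perspective transform
  have key : StrictConvexOn ℝ (Ioi (0:ℝ))
      (fun α : ℝ => α * Real.log (∫ ω, Real.exp (-Y ω / α) ∂μ)) := by
    have hfun : ∀ α : ℝ, (∫ ω, Real.exp (-Y ω / α) ∂μ) = J (-(1/α)) := by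
      intro α
      rw [hJdef]
      congr 1
      funext ω
      congr 1
      ring
    refine ⟨convex_Ioi 0, fun x hx y hy hxy a b ha hb hab => ?_⟩
    simp only [smul_eq_mul, hfun]
    have hx0 : (0:ℝ) < x := hx
    have hy0 : (0:ℝ) < y := hy
    have hz0 : (0:ℝ) < a*x + b*y := by positivity
    set z := a*x + b*y with hz
    have hne : -(1/x) ≠ -(1/y) := by
      intro h
      apply hxy
      have := neg_injective h
      field_simp at this
      linarith
    have hs1 : 0 < a*x/z := by positivity
    have hs2 : 0 < b*y/z := by positivity
    have hssum : a*x/z + b*y/z = 1 := by field_simp; exact hz.symm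
    have hK := Kstrict.2 (mem_univ (-(1/x))) (mem_univ (-(1/y))) hne hs1 hs2 hssum
    simp only [smul_eq_mul] at hK
    have hβ : a*x/z * -(1/x) + b*y/z * -(1/y) = -(1/z) := by
      have e1 : a*x/z * -(1/x) = -(a/z) := by
        rw [mul_neg, neg_inj, div_mul_div_comm, mul_one]
        rw [mul_comm z x, ← div_div, mul_div_assoc, div_self hx0.ne', mul_one]
      have e2 : b*y/z * -(1/y) = -(b/z) := by
        rw [mul_neg, neg_inj, div_mul_div_comm, mul_one]
        rw [mul_comm z y, ← div_div, mul_div_assoc, div_self hy0.ne', mul_one]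
      rw [e1, e2, ← neg_add, ← add_div, hab]
    rw [hβ] at hK
    have hmul := mul_lt_mul_of_pos_left hK hz0
    have hrhs : z * (a*x/z * Real.log (J (-(1/x))) + b*y/z * Real.log (J (-(1/y))))
        = a * (x * Real.log (J (-(1/x)))) + b * (y * Real.log (J (-(1/y)))) := by
      field_simp
    rw [hrhs] at hmul
    exact hmul
  refine ⟨key, fun δ hδ => ?_⟩
  have hlin : ConvexOn ℝ (Ioi (0:ℝ)) (fun α : ℝ => α * δ) :=
    ⟨convex_Ioi 0, fun x _ y _ a b _ _ _ => le_of_eq (by simp only [smul_eq_mul]; ring)⟩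
  exact key.add_convexOn hlin
end

section
/- Let Y be a random variable supported on [0, M] whose distribution has a density f with f(y) ≥ b > 0 for all y ∈ [0, M]. Then liminf_{α → 0+} ( E[exp(−Y/α)] / α ) ≥ b. Moreover, if additionally f(y) ≤ b̄ < ∞ for all y ∈ [0, M], then E[(Y/α) exp(−Y/α)] ≤ α b̄ for every α > 0, and consequently limsup_{α → 0+} E[(Y/α) exp(−Y/α)] / E[exp(−Y/α)] ≤ b̄/b. -/
open MeasureTheory Real Set Filter

lemma auxI1 (M α : ℝ) (hα : 0 < α) (hM : 0 ≤ M) :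
    ∫ y in Set.Icc (0:ℝ) M, Real.exp (-y/α) = α * (1 - Real.exp (-M/α)) := by
  rw [MeasureTheory.integral_Icc_eq_integral_Ioc,
    ← intervalIntegral.integral_of_le hM]
  have key : ∀ x ∈ Set.uIcc (0:ℝ) M,
      HasDerivAt (fun x : ℝ => -α * Real.exp (-x/α)) (Real.exp (-x/α)) x := by
    intro x _
    have h1 : HasDerivAt (fun x : ℝ => -x/α) (-1/α) x := ((hasDerivAt_id x).neg).div_const α
    have h3 := (h1.exp).const_mul (-α)
    refine h3.congr_deriv ?_
    have hα' : α ≠ 0 := ne_of_gt hα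
    field_simp
  rw [intervalIntegral.integral_eq_sub_of_hasDerivAt key
    ((Continuous.intervalIntegrable (by fun_prop) _ _))]
  simp [neg_div]
  ring

lemma auxI2 (M α : ℝ) (hα : 0 < α) (hM : 0 ≤ M) :
    ∫ y in Set.Icc (0:ℝ) M, (y/α) * Real.exp (-y/α)
      = α - (M + α) * Real.exp (-M/α) := by
  rw [MeasureTheory.integral_Icc_eq_integral_Ioc,
    ← intervalIntegral.integral_of_le hM]
  have key : ∀ x ∈ Set.uIcc (0:ℝ) M,
      HasDerivAt (fun x : ℝ => -(x + α) * Real.exp (-x/α))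
        ((x/α) * Real.exp (-x/α)) x := by
    intro x _
    have h1 : HasDerivAt (fun x : ℝ => -(x + α)) (-1) x := ((hasDerivAt_id x).add_const α).neg
    have h2 : HasDerivAt (fun x : ℝ => Real.exp (-x/α)) (Real.exp (-x/α) * (-1/α)) x :=
      (((hasDerivAt_id x).neg).div_const α).exp
    have h3 := h1.mul h2
    refine h3.congr_deriv ?_
    have hα' : α ≠ 0 := ne_of_gt hα
    field_simp
    ring
  rw [intervalIntegral.integral_eq_sub_of_hasDerivAt key
    ((Continuous.intervalIntegrable (by fun_prop) _ _))]
  simp [neg_div]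
  ring

/-- **Small-`α` estimates for the KL dual objective.** If `Y` has a density `f` supported on
`[0, M]` with `b ≤ f` on `[0, M]`, then `liminf_{α→0+} E[exp(−Y/α)]/α ≥ b` (stated in the
robust form: every `c < b` is an eventual lower bound); if moreover `f ≤ B` on `[0, M]`, then
`E[(Y/α)exp(−Y/α)] ≤ αB` for all `α > 0` and
`limsup_{α→0+} E[(Y/α)exp(−Y/α)] / E[exp(−Y/α)] ≤ B/b` (every `c > B/b` is an eventual
upper bound). -/
theorem stmt18 {Ω : Type*} [MeasurableSpace Ω] (μ : Measure Ω) [IsProbabilityMeasure μ]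
    (Y : Ω → ℝ) (hY : Measurable Y) (M b : ℝ) (hb : 0 < b)
    (f : ℝ → ℝ) (hfmeas : Measurable f)
    (hf0 : ∀ y : ℝ, y ∉ Set.Icc 0 M → f y = 0)
    (hfb : ∀ y ∈ Set.Icc (0 : ℝ) M, b ≤ f y)
    (hlaw : Measure.map Y μ = MeasureTheory.volume.withDensity
      (fun y => ENNReal.ofReal (f y))) :
    (∀ c : ℝ, c < b → ∀ᶠ α in nhdsWithin (0 : ℝ) (Set.Ioi 0),
        c ≤ (∫ ω, Real.exp (-Y ω / α) ∂μ) / α) ∧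
    (∀ B : ℝ, (∀ y ∈ Set.Icc (0 : ℝ) M, f y ≤ B) →
      (∀ α : ℝ, 0 < α → ∫ ω, (Y ω / α) * Real.exp (-Y ω / α) ∂μ ≤ α * B) ∧
      (∀ c : ℝ, B / b < c → ∀ᶠ α in nhdsWithin (0 : ℝ) (Set.Ioi 0),
          (∫ ω, (Y ω / α) * Real.exp (-Y ω / α) ∂μ) / (∫ ω, Real.exp (-Y ω / α) ∂μ) ≤ c)) := by
  haveI hmapprob : IsProbabilityMeasure (Measure.map Y μ) :=
    Measure.isProbabilityMeasure_map hY.aemeasurable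
  -- M is positive
  have hMpos : 0 < M := by
    by_contra h
    push_neg at h
    have hIcc : (volume : Measure ℝ) (Set.Icc (0:ℝ) M) = 0 := by
      rw [Real.volume_Icc]
      simp only [ENNReal.ofReal_eq_zero]
      linarith
    have hnm : ∀ᵐ y ∂(volume : Measure ℝ), y ∉ Set.Icc (0:ℝ) M :=
      measure_eq_zero_iff_ae_notMem.mp hIcc
    have hf_ae : (fun y => ENNReal.ofReal (f y)) =ᵐ[(volume : Measure ℝ)]
        (fun _ => (0 : ENNReal)) := by
      filter_upwards [hnm] with y hy
      simp [hf0 y hy]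
    have h0 : (volume.withDensity fun y => ENNReal.ofReal (f y)) Set.univ = 0 := by
      rw [withDensity_apply _ MeasurableSet.univ, Measure.restrict_univ,
        lintegral_congr_ae hf_ae]
      simp
    have h1 : (Measure.map Y μ) Set.univ = 1 := measure_univ
    rw [hlaw, h0] at h1
    exact zero_ne_one h1
  -- the pushforward gives no mass outside [0, M]
  have hmapIcc : Measure.map Y μ (Set.Icc (0:ℝ) M)ᶜ = 0 := by
    rw [hlaw, withDensity_apply _ measurableSet_Icc.compl]
    rw [setLIntegral_congr_fun (g := fun _ => (0:ENNReal)) measurableSet_Icc.compl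
      (fun y hy => by simp [hf0 y hy])]
    simp
  have hmem_map : ∀ᵐ y ∂(Measure.map Y μ), y ∈ Set.Icc (0:ℝ) M := by
    filter_upwards [measure_eq_zero_iff_ae_notMem.mp hmapIcc] with y hy
    by_contra h; exact hy h
  -- lower measure bound
  have hlow : (ENNReal.ofReal b) • ((volume : Measure ℝ).restrict (Set.Icc 0 M))
      ≤ Measure.map Y μ := by
    rw [hlaw]
    have heq : (ENNReal.ofReal b) • ((volume : Measure ℝ).restrict (Set.Icc 0 M))
        = volume.withDensity ((Set.Icc (0:ℝ) M).indicator fun _ => ENNReal.ofReal b) := by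
      rw [withDensity_indicator measurableSet_Icc, withDensity_const]
    rw [heq]
    refine withDensity_mono (Filter.Eventually.of_forall fun y => ?_)
    by_cases hy : y ∈ Set.Icc (0:ℝ) M
    · simp only [Set.indicator_of_mem hy]
      exact ENNReal.ofReal_le_ofReal (hfb y hy)
    · simp [Set.indicator_of_notMem hy]
  -- exp(-M/α) < 1 for α > 0
  have hexp_lt_one : ∀ α : ℝ, 0 < α → Real.exp (-M/α) < 1 := by
    intro α hα
    rw [← Real.exp_zero]
    apply Real.exp_lt_exp.mpr
    rw [neg_div]
    simp only [neg_lt_zero]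
    positivity
  -- key lower bound on the denominator
  have key1 : ∀ α : ℝ, 0 < α →
      b * (α * (1 - Real.exp (-M/α))) ≤ ∫ ω, Real.exp (-Y ω / α) ∂μ := by
    intro α hα
    have hmapint : ∫ ω, Real.exp (-Y ω / α) ∂μ
        = ∫ y, Real.exp (-y/α) ∂(Measure.map Y μ) :=
      (integral_map hY.aemeasurable
        (Continuous.aestronglyMeasurable
          (show Continuous fun y : ℝ => Real.exp (-y/α) by fun_prop))).symm
    have hInt1 : Integrable (fun y => Real.exp (-y/α)) (Measure.map Y μ) := by
      refine Integrable.mono' (integrable_const 1)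
        (Continuous.aestronglyMeasurable (by fun_prop)) ?_
      filter_upwards [hmem_map] with y hy
      rw [Real.norm_eq_abs, abs_of_pos (Real.exp_pos _)]
      rw [Real.exp_le_one_iff, neg_div, neg_nonpos]
      exact div_nonneg hy.1 hα.le
    have hmono := integral_mono_measure hlow
      (Filter.Eventually.of_forall fun y => (Real.exp_pos (-y/α)).le) hInt1
    rw [integral_smul_measure, ENNReal.toReal_ofReal hb.le, smul_eq_mul,
      auxI1 M α hα hMpos.le] at hmono
    rw [hmapint]
    exact hmono
  -- tendsto fact
  have htend : Tendsto (fun α : ℝ => Real.exp (-M/α)) (nhdsWithin (0:ℝ) (Set.Ioi 0))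
      (nhds 0) := by
    have h1 : Tendsto (fun α : ℝ => M/α) (nhdsWithin (0:ℝ) (Set.Ioi 0)) atTop := by
      simp only [div_eq_mul_inv]
      exact Tendsto.const_mul_atTop hMpos tendsto_inv_nhdsGT_zero
    have h2 : Tendsto (fun α : ℝ => -M/α) (nhdsWithin (0:ℝ) (Set.Ioi 0)) atBot := by
      simp only [neg_div]
      exact tendsto_neg_atBot_iff.mpr h1
    exact Real.tendsto_exp_atBot.comp h2
  constructor
  · -- first claim
    intro c hc
    have htb : Tendsto (fun α : ℝ => b * (1 - Real.exp (-M/α)))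
        (nhdsWithin (0:ℝ) (Set.Ioi 0)) (nhds b) := by
      have := (tendsto_const_nhds (x := (1:ℝ))
        (f := nhdsWithin (0:ℝ) (Set.Ioi 0))).sub htend
      have h2 := (tendsto_const_nhds (x := b)
        (f := nhdsWithin (0:ℝ) (Set.Ioi 0))).mul this
      simpa using h2
    filter_upwards [htb.eventually (eventually_gt_nhds hc), self_mem_nhdsWithin]
      with α h1 h2
    have hα : 0 < α := h2
    have h3 := key1 α hα
    rw [le_div_iff₀ hα]
    calc c * α ≤ (b * (1 - Real.exp (-M/α))) * α := by nlinarith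
      _ = b * (α * (1 - Real.exp (-M/α))) := by ring
      _ ≤ _ := h3
  · intro B hfB
    have h0mem : (0:ℝ) ∈ Set.Icc (0:ℝ) M := ⟨le_refl 0, hMpos.le⟩
    have hbB : b ≤ B := le_trans (hfb 0 h0mem) (hfB 0 h0mem)
    have hB : 0 < B := lt_of_lt_of_le hb hbB
    -- upper measure bound
    have hup : Measure.map Y μ
        ≤ (ENNReal.ofReal B) • ((volume : Measure ℝ).restrict (Set.Icc 0 M)) := by
      rw [hlaw]
      have heq : (ENNReal.ofReal B) • ((volume : Measure ℝ).restrict (Set.Icc 0 M))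
          = volume.withDensity ((Set.Icc (0:ℝ) M).indicator fun _ => ENNReal.ofReal B) := by
        rw [withDensity_indicator measurableSet_Icc, withDensity_const]
      rw [heq]
      refine withDensity_mono (Filter.Eventually.of_forall fun y => ?_)
      by_cases hy : y ∈ Set.Icc (0:ℝ) M
      · simp only [Set.indicator_of_mem hy]
        exact ENNReal.ofReal_le_ofReal (hfB y hy)
      · simp [Set.indicator_of_notMem hy, hf0 y hy]
    have key2 : ∀ α : ℝ, 0 < α →
        ∫ ω, (Y ω / α) * Real.exp (-Y ω / α) ∂μ ≤ α * B := by
      intro α hα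
      have hmapint : ∫ ω, (Y ω / α) * Real.exp (-Y ω / α) ∂μ
          = ∫ y, (y/α) * Real.exp (-y/α) ∂(Measure.map Y μ) :=
        (integral_map hY.aemeasurable
          (Continuous.aestronglyMeasurable
            (show Continuous fun y : ℝ => (y/α) * Real.exp (-y/α) by fun_prop))).symm
      have hpos : 0 ≤ᵐ[(ENNReal.ofReal B) • ((volume : Measure ℝ).restrict (Set.Icc 0 M))]
          (fun y => (y/α) * Real.exp (-y/α)) := by
        refine Measure.ae_smul_measure ?_ _
        filter_upwards [ae_restrict_mem measurableSet_Icc] with y hy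
        exact mul_nonneg (div_nonneg hy.1 hα.le) (Real.exp_pos _).le
      have hint : Integrable (fun y => (y/α) * Real.exp (-y/α))
          ((ENNReal.ofReal B) • ((volume : Measure ℝ).restrict (Set.Icc 0 M))) :=
        Integrable.smul_measure (show Integrable (fun y : ℝ => (y/α) * Real.exp (-y/α)) ((volume : Measure ℝ).restrict (Set.Icc 0 M)) from
          Continuous.integrableOn_Icc (by fun_prop)) ENNReal.ofReal_ne_top
      have hmono := integral_mono_measure hup hpos hint
      rw [integral_smul_measure, ENNReal.toReal_ofReal hB.le, smul_eq_mul,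
        auxI2 M α hα hMpos.le] at hmono
      rw [hmapint]
      calc _ ≤ B * (α - (M + α) * Real.exp (-M/α)) := hmono
        _ ≤ α * B := by
            nlinarith [mul_nonneg (mul_nonneg hB.le (by linarith : (0:ℝ) ≤ M + α))
              (Real.exp_pos (-M/α)).le]
    refine ⟨key2, ?_⟩
    intro c hc
    have htc : Tendsto (fun α : ℝ => B / (b * (1 - Real.exp (-M/α))))
        (nhdsWithin (0:ℝ) (Set.Ioi 0)) (nhds (B / b)) := by
      have hden : Tendsto (fun α : ℝ => b * (1 - Real.exp (-M/α)))
          (nhdsWithin (0:ℝ) (Set.Ioi 0)) (nhds b) := by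
        have := (tendsto_const_nhds (x := (1:ℝ))
          (f := nhdsWithin (0:ℝ) (Set.Ioi 0))).sub htend
        have h2 := (tendsto_const_nhds (x := b)
          (f := nhdsWithin (0:ℝ) (Set.Ioi 0))).mul this
        simpa using h2
      exact Tendsto.div tendsto_const_nhds hden (ne_of_gt hb)
    filter_upwards [htc.eventually (eventually_lt_nhds hc), self_mem_nhdsWithin]
      with α h1 h2
    have hα : 0 < α := h2
    have hd : 0 < b * (α * (1 - Real.exp (-M/α))) := by
      have := hexp_lt_one α hα
      have h1e : 0 < 1 - Real.exp (-M/α) := by linarith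
      positivity
    have hnum := key2 α hα
    have hden := key1 α hα
    calc (∫ ω, (Y ω / α) * Real.exp (-Y ω / α) ∂μ) / (∫ ω, Real.exp (-Y ω / α) ∂μ)
        ≤ (α * B) / (b * (α * (1 - Real.exp (-M/α)))) :=
          div_le_div₀ (by positivity) hnum hd hden
      _ = B / (b * (1 - Real.exp (-M/α))) := by
          have h1e : (0:ℝ) < 1 - Real.exp (-M/α) := by linarith [hexp_lt_one α hα]
          have hα' : α ≠ 0 := hα.ne'
          have hb' : b ≠ 0 := hb.ne'
          have h1e' : (1 - Real.exp (-M/α)) ≠ 0 := h1e.ne'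
          field_simp
      _ ≤ c := h1.le
end

section
/- Let Y be a random variable with 0 ≤ Y ≤ M almost surely. Then lim_{α → 0+} ( −α log E[exp(−Y/α)] ) = essinf Y, where essinf Y denotes the essential infimum of Y. -/
open MeasureTheory Real Set Filter

/-- **Right-continuity of the KL dual objective at `α = 0`:**
for a bounded nonnegative random variable `Y`,
`−α log E[exp(−Y/α)] → essinf Y` as `α → 0+`. -/
theorem stmt19 {Ω : Type*} [MeasurableSpace Ω] (μ : Measure Ω) [IsProbabilityMeasure μ]
    (Y : Ω → ℝ) (hY : Measurable Y) (M : ℝ) (hbd : ∀ᵐ ω ∂μ, Y ω ∈ Set.Icc 0 M) :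
    Filter.Tendsto (fun α : ℝ => -α * Real.log (∫ ω, Real.exp (-Y ω / α) ∂μ))
      (nhdsWithin 0 (Set.Ioi 0)) (nhds (essInf Y μ)) := by
  have hbd0 : ∀ᵐ ω ∂μ, 0 ≤ Y ω := hbd.mono fun ω h => h.1
  have hbdM : ∀ᵐ ω ∂μ, Y ω ≤ M := hbd.mono fun ω h => h.2
  set m := essInf Y μ with hm
  have hBdd : IsBoundedUnder (· ≥ ·) (ae μ) Y := ⟨0, hbd0⟩
  have hBddAbove : IsBoundedUnder (· ≤ ·) (ae μ) Y := ⟨M, hbdM⟩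
  have hCobdd : IsCoboundedUnder (· ≥ ·) (ae μ) Y :=
    hBddAbove.isCoboundedUnder_ge
  have h_ae_m : ∀ᵐ ω ∂μ, m ≤ Y ω := ae_essInf_le hBdd
  -- positivity of the measure of sublevel sets
  have key : ∀ ε : ℝ, 0 < ε → μ {ω | Y ω ≤ m + ε} ≠ 0 := by
    intro ε hε h0
    have hae : ∀ᵐ ω ∂μ, m + ε ≤ Y ω := by
      rw [ae_iff]
      refine measure_mono_null ?_ h0
      intro ω hω
      simp only [Set.mem_setOf_eq, not_le] at hω ⊢
      exact hω.le
    have : m + ε ≤ m := le_liminf_of_le hCobdd hae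
    linarith
  rw [Metric.tendsto_nhdsWithin_nhds]
  intro ε hε
  set s : Set Ω := {ω | Y ω ≤ m + ε / 2} with hs
  have hsm : MeasurableSet s := hY measurableSet_Iic
  have hps : μ s ≠ 0 := key (ε / 2) (by linarith)
  set p : ℝ := (μ s).toReal with hp
  have hp_pos : 0 < p := ENNReal.toReal_pos hps (measure_ne_top μ s)
  refine ⟨ε / 2 / (1 + |Real.log p|), by positivity, ?_⟩
  intro α hα hdist
  have hα0 : 0 < α := hα
  rw [Real.dist_eq] at hdist
  rw [sub_zero, abs_of_pos hα0] at hdist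
  -- integrability and bounds
  have hmeas : Measurable fun ω => Real.exp (-Y ω / α) :=
    (hY.neg.div_const α).exp
  have h_int : Integrable (fun ω => Real.exp (-Y ω / α)) μ := by
    refine ⟨hmeas.aestronglyMeasurable, HasFiniteIntegral.of_bounded (C := 1) ?_⟩
    filter_upwards [hbd0] with ω h0
    rw [Real.norm_eq_abs, abs_of_pos (Real.exp_pos _)]
    calc Real.exp (-Y ω / α) ≤ Real.exp 0 := by
          apply Real.exp_le_exp.2
          apply div_nonpos_of_nonpos_of_nonneg (by linarith) hα0.le
      _ = 1 := Real.exp_zero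
  set I : ℝ := ∫ ω, Real.exp (-Y ω / α) ∂μ with hI
  -- lower bound on the integral
  have h_lb : Real.exp (-(m + ε / 2) / α) * p ≤ I := by
    calc Real.exp (-(m + ε / 2) / α) * p
        ≤ ∫ ω in s, Real.exp (-Y ω / α) ∂μ := by
          refine setIntegral_ge_of_const_le_real hsm (measure_ne_top μ s) ?_ h_int.integrableOn
          intro ω hω
          apply Real.exp_le_exp.2
          apply div_le_div_of_nonneg_right _ hα0.le
          · simpa [hs] using hω
      _ ≤ I := setIntegral_le_integral h_int (Filter.Eventually.of_forall fun ω => (Real.exp_pos _).le)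
  have hI_pos : 0 < I :=
    lt_of_lt_of_le (by positivity) h_lb
  -- upper bound on the integral
  have h_ub : I ≤ Real.exp (-m / α) := by
    calc I ≤ ∫ _ω, Real.exp (-m / α) ∂μ := by
          refine integral_mono_ae h_int (integrable_const _) ?_
          filter_upwards [h_ae_m] with ω hω
          apply Real.exp_le_exp.2
          apply div_le_div_of_nonneg_right _ hα0.le
          linarith
      _ = Real.exp (-m / α) := by simp
  -- bound the log
  have hlog_ub : Real.log I ≤ -m / α := by
    calc Real.log I ≤ Real.log (Real.exp (-m / α)) := Real.log_le_log hI_pos h_ub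
      _ = -m / α := Real.log_exp _
  have hlog_lb : -(m + ε / 2) / α + Real.log p ≤ Real.log I := by
    calc -(m + ε / 2) / α + Real.log p
        = Real.log (Real.exp (-(m + ε / 2) / α) * p) := by
          rw [Real.log_mul (Real.exp_ne_zero _) (ne_of_gt hp_pos), Real.log_exp]
      _ ≤ Real.log I := Real.log_le_log (by positivity) h_lb
  -- conclude
  have hg_lb : m ≤ -α * Real.log I := by
    have := mul_le_mul_of_nonneg_left hlog_ub hα0.le
    rw [mul_div_cancel₀ _ (ne_of_gt hα0)] at this
    nlinarith
  have hg_ub : -α * Real.log I ≤ m + ε / 2 - α * Real.log p := by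
    have := mul_le_mul_of_nonneg_left hlog_lb hα0.le
    rw [mul_add, mul_div_cancel₀ _ (ne_of_gt hα0)] at this
    nlinarith
  have hsmall : -α * Real.log p < ε / 2 := by
    have hd' : α * (1 + |Real.log p|) < ε / 2 :=
      (lt_div_iff₀ (by positivity)).mp hdist
    have h1 : α * (-Real.log p) ≤ α * |Real.log p| :=
      mul_le_mul_of_nonneg_left (neg_le_abs _) hα0.le
    nlinarith [abs_nonneg (Real.log p)]
  rw [Real.dist_eq, abs_of_nonneg (by linarith)]
  linarith
end
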